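/- For every m₁, m₂ ∈ ℕ, working in ℚ: Σ_n (−1)^n / n · n! / ((n − m₁)! · (n − m₂)! · (m₁ + m₂ − n)!) — where the sum ranges over all integers n with n ≥ 1, n ≥ m₁, n ≥ m₂, and n ≤ m₁ + m₂ — equals (−1)^{m₁}/m₁ if m₁ ≥ 1 and m₂ = 0; equals (−1)^{m₂}/m₂ if m₁ = 0 and m₂ ≥ 1; and equals 0 otherwise (in particular it is 0 when m₁ = m₂ = 0, the sum being empty, and 0 when both m₁ ≥ 1 and m₂ ≥ 1). -/

import Mathlib

open Finset

/-- Auxiliary alternating sum. -/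
def stmt12A (m s r : ℕ) : ℚ :=
  ∑ j ∈ Finset.range (m+1), (-1:ℚ)^j * (m.choose j) * ((j+s).choose r)

lemma stmt12A_succ (m s r : ℕ) : stmt12A (m+1) s r = stmt12A m s r - stmt12A m (s+1) r := by
  have key : ∀ j : ℕ, (-1:ℚ)^(j+1) * (((m+1).choose (j+1) : ℕ) : ℚ) * (((j+1+s).choose r : ℕ) : ℚ)
      = (-1:ℚ)^(j+1) * (m.choose (j+1)) * ((j+1+s).choose r)
        - (-1:ℚ)^j * (m.choose j) * ((j+(s+1)).choose r) := by
    intro j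
    have h1 : (m+1).choose (j+1) = m.choose j + m.choose (j+1) := Nat.choose_succ_succ m j
    have h2 : j + 1 + s = j + (s + 1) := by omega
    rw [h1, h2]
    push_cast
    ring
  have h2 : ∑ j ∈ range (m+1), (-1:ℚ)^(j+1) * (m.choose (j+1)) * ((j+1+s).choose r)
      = stmt12A m s r - (s.choose r : ℚ) := by
    have e := Finset.sum_range_succ' (fun j => (-1:ℚ)^j * (m.choose j) * ((j+s).choose r)) (m+1)
    have e1 : ∑ j ∈ range (m+1+1), (-1:ℚ)^j * (m.choose j) * ((j+s).choose r)
        = stmt12A m s r := by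
      rw [Finset.sum_range_succ]
      simp [stmt12A, Nat.choose_succ_self]
    rw [e1] at e
    simp only [pow_zero, Nat.choose_zero_right, Nat.cast_one, one_mul, zero_add] at e
    linarith [e]
  unfold stmt12A
  rw [Finset.sum_range_succ' (fun j => (-1:ℚ)^j * (((m+1).choose j : ℕ) : ℚ) * ((j+s).choose r)) (m+1)]
  rw [Finset.sum_congr rfl (fun j _ => key j), Finset.sum_sub_distrib, h2]
  simp only [pow_zero, Nat.choose_zero_right, Nat.cast_one, one_mul, zero_add,
    Nat.add_comm 1 m]
  rw [show (∑ x ∈ range (m+1), (-1:ℚ)^x * (m.choose x) * ((x + s).choose r))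
      = stmt12A m s r from rfl,
    show (∑ x ∈ range (m+1), (-1:ℚ)^x * (m.choose x) * ((x + (s+1)).choose r))
      = stmt12A m (s+1) r from rfl]
  ring

lemma stmt12A_eq_zero : ∀ m s r : ℕ, r < m → stmt12A m s r = 0 := by
  intro m
  induction m with
  | zero => intro s r h; omega
  | succ m ih =>
    intro s r h
    rw [stmt12A_succ]
    rcases Nat.lt_or_ge r m with h' | h'
    · rw [ih s r h', ih (s+1) r h', sub_zero]
    · have hr : r = m := by omega
      subst hr
      rcases Nat.eq_zero_or_pos r with hm | hm
      · subst hm; simp [stmt12A]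
      · obtain ⟨k, rfl⟩ : ∃ k, r = k + 1 := ⟨r - 1, by omega⟩
        have hsplit : stmt12A (k+1) (s+1) (k+1)
            = stmt12A (k+1) s k + stmt12A (k+1) s (k+1) := by
          unfold stmt12A
          rw [← Finset.sum_add_distrib]
          refine Finset.sum_congr rfl (fun j _ => ?_)
          have h1 : j + (s+1) = (j + s) + 1 := by omega
          rw [h1, Nat.choose_succ_succ (j+s) k]
          push_cast
          ring
        rw [hsplit, ih s k (by omega)]
        ring

/-- Lemma B.7 ('comb_sum_coupling_to_basis_major'). For `m₁ m₂ : ℕ`,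
`∑_n (-1)^n/n · n!/((n-m₁)!(n-m₂)!(m₁+m₂-n)!)`, over integers `n` with
`n ≥ 1`, `n ≥ m₁`, `n ≥ m₂`, `n ≤ m₁+m₂`, equals `(-1)^{m₁}/m₁` if `m₁ ≥ 1 ∧ m₂ = 0`,
`(-1)^{m₂}/m₂` if `m₁ = 0 ∧ 1 ≤ m₂`... -/
theorem stmt_12 (m₁ m₂ : ℕ) :
    ∑ n ∈ (Finset.Icc 1 (m₁ + m₂)).filter (fun n => m₁ ≤ n ∧ m₂ ≤ n),
      (-1 : ℚ) ^ n / (n : ℚ) * (n.factorial : ℚ) /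
        (((n - m₁).factorial : ℚ) * ((n - m₂).factorial : ℚ) *
          ((m₁ + m₂ - n).factorial : ℚ)) =
      if 1 ≤ m₁ ∧ m₂ = 0 then (-1 : ℚ) ^ m₁ / (m₁ : ℚ)
      else if m₁ = 0 ∧ 1 ≤ m₂ then (-1 : ℚ) ^ m₂ / (m₂ : ℚ)
      else 0 := by
  -- helper for the two degenerate cases
  rcases Nat.eq_zero_or_pos m₂ with h2 | h2
  · subst h2
    rcases Nat.eq_zero_or_pos m₁ with h1 | h1
    · subst h1; simp
    · have hset : (Finset.Icc 1 (m₁ + 0)).filter (fun n => m₁ ≤ n ∧ 0 ≤ n) = {m₁} := by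
        ext n
        simp only [Finset.mem_filter, Finset.mem_Icc, Finset.mem_singleton]
        omega
      rw [hset, Finset.sum_singleton, if_pos ⟨h1, rfl⟩]
      have e1 : m₁ + 0 - m₁ = 0 := by omega
      have e2 : m₁ - 0 = m₁ := by omega
      rw [Nat.sub_self, e1, e2, Nat.factorial_zero]
      have hf : (m₁.factorial : ℚ) ≠ 0 := by
        exact_mod_cast m₁.factorial_ne_zero
      field_simp
      ring
  · rcases Nat.eq_zero_or_pos m₁ with h1 | h1
    · subst h1
      have hset : (Finset.Icc 1 (0 + m₂)).filter (fun n => 0 ≤ n ∧ m₂ ≤ n) = {m₂} := by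
        ext n
        simp only [Finset.mem_filter, Finset.mem_Icc, Finset.mem_singleton]
        omega
      rw [hset, Finset.sum_singleton, if_neg (by omega), if_pos ⟨rfl, h2⟩]
      have e1 : 0 + m₂ - m₂ = 0 := by omega
      have e2 : m₂ - 0 = m₂ := by omega
      rw [Nat.sub_self, e1, e2, Nat.factorial_zero]
      have hf : (m₂.factorial : ℚ) ≠ 0 := by
        exact_mod_cast m₂.factorial_ne_zero
      field_simp
      ring
    · rw [if_neg (by omega), if_neg (by omega)]
      set g : ℕ → ℚ := fun n =>
        (-1:ℚ)^n / (m₁:ℚ) * (((n-1).choose (m₁-1) : ℕ) : ℚ) * ((m₁.choose (n - m₂) : ℕ) : ℚ)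
        with hg
      have step1 : ∑ n ∈ (Finset.Icc 1 (m₁ + m₂)).filter (fun n => m₁ ≤ n ∧ m₂ ≤ n),
          (-1 : ℚ) ^ n / (n : ℚ) * (n.factorial : ℚ) /
            (((n - m₁).factorial : ℚ) * ((n - m₂).factorial : ℚ) *
              ((m₁ + m₂ - n).factorial : ℚ))
          = ∑ n ∈ (Finset.Icc 1 (m₁ + m₂)).filter (fun n => m₁ ≤ n ∧ m₂ ≤ n), g n := by
        refine Finset.sum_congr rfl (fun n hn => ?_)
        simp only [Finset.mem_filter, Finset.mem_Icc] at hn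
        obtain ⟨⟨hn1, hnle⟩, hnm1, hnm2⟩ := hn
        have hkey : n.choose m₁ * m₁.choose (n-m₂) *
            ((n-m₁).factorial * ((n-m₂).factorial * (m₁+m₂-n).factorial)) = n.factorial := by
          have h3 : m₁ + m₂ - n = m₁ - (n - m₂) := by omega
          rw [h3]
          have a := Nat.choose_mul_factorial_mul_factorial (show m₁ ≤ n from hnm1)
          have b := Nat.choose_mul_factorial_mul_factorial (show n - m₂ ≤ m₁ by omega)
          calc n.choose m₁ * m₁.choose (n-m₂) *
              ((n-m₁).factorial * ((n-m₂).factorial * (m₁-(n-m₂)).factorial))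
              = n.choose m₁ * (m₁.choose (n-m₂) * (n-m₂).factorial * (m₁-(n-m₂)).factorial)
                * (n-m₁).factorial := by ring
            _ = n.choose m₁ * m₁.factorial * (n-m₁).factorial := by rw [b]
            _ = n.factorial := a
        have hmc : n * ((n-1).choose (m₁-1)) = n.choose m₁ * m₁ := by
          have := Nat.add_one_mul_choose_eq (n-1) (m₁-1)
          have e1 : n - 1 + 1 = n := by omega
          have e2 : m₁ - 1 + 1 = m₁ := by omega
          rw [e1, e2] at this
          exact this
        have e1 : (n.factorial : ℚ) = (n.choose m₁ : ℚ) * (m₁.choose (n-m₂) : ℚ) *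
            (((n-m₁).factorial : ℚ) * (((n-m₂).factorial : ℚ) * ((m₁+m₂-n).factorial : ℚ))) := by
          exact_mod_cast hkey.symm
        have e2 : (n : ℚ) * (((n-1).choose (m₁-1) : ℕ) : ℚ) = (n.choose m₁ : ℚ) * (m₁ : ℚ) := by
          exact_mod_cast hmc
        have hn0 : (n : ℚ) ≠ 0 := by positivity
        have hm0 : (m₁ : ℚ) ≠ 0 := by positivity
        have hf1 : ((n-m₁).factorial : ℚ) ≠ 0 := by exact_mod_cast (n-m₁).factorial_ne_zero
        have hf2 : ((n-m₂).factorial : ℚ) ≠ 0 := by exact_mod_cast (n-m₂).factorial_ne_zero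
        have hf3 : ((m₁+m₂-n).factorial : ℚ) ≠ 0 := by exact_mod_cast (m₁+m₂-n).factorial_ne_zero
        rw [hg]
        field_simp
        rw [e1]
        linear_combination (-(m₁.choose (n-m₂) : ℚ) * ((n-m₁).factorial : ℚ) *
          ((n-m₂).factorial : ℚ) * ((m₁+m₂-n).factorial : ℚ)) * e2
      rw [step1]
      have hsub : (Finset.Icc 1 (m₁ + m₂)).filter (fun n => m₁ ≤ n ∧ m₂ ≤ n)
          ⊆ Finset.Icc m₂ (m₁ + m₂) := by
        intro n hn
        simp only [Finset.mem_filter, Finset.mem_Icc] at hn ⊢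
        omega
      have step2 : ∑ n ∈ (Finset.Icc 1 (m₁ + m₂)).filter (fun n => m₁ ≤ n ∧ m₂ ≤ n), g n
          = ∑ n ∈ Finset.Icc m₂ (m₁ + m₂), g n := by
        refine Finset.sum_subset hsub (fun n hn hn' => ?_)
        simp only [Finset.mem_filter, Finset.mem_Icc] at hn hn'
        have hlt : n < m₁ := by omega
        have : (n-1).choose (m₁-1) = 0 := Nat.choose_eq_zero_of_lt (by omega)
        simp [hg, this]
      rw [step2]
      have step3 : ∑ n ∈ Finset.Icc m₂ (m₁ + m₂), g n
          = ((-1:ℚ)^m₂ / (m₁:ℚ)) * stmt12A m₁ (m₂-1) (m₁-1) := by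
        have : Finset.Icc m₂ (m₁ + m₂) = Finset.Ico m₂ (m₁ + m₂ + 1) := by
          rw [Finset.Ico_add_one_right_eq_Icc]
        rw [this, Finset.sum_Ico_eq_sum_range]
        have hb : m₁ + m₂ + 1 - m₂ = m₁ + 1 := by omega
        rw [hb, stmt12A, Finset.mul_sum]
        refine Finset.sum_congr rfl (fun j _ => ?_)
        have e1 : m₂ + j - m₂ = j := by omega
        have e2 : m₂ + j - 1 = j + (m₂ - 1) := by omega
        simp only [hg, e1, e2, pow_add]
        ring
      rw [step3, stmt12A_eq_zero m₁ (m₂-1) (m₁-1) (by omega), mul_zero]
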